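/- Assume in addition w + w′ ≤ 2c. Define the target joint distribution P* on {c − r·α(ε), c + r·α(ε)}² by P*(c−rα, c−rα) = (2c − w − w′)/(2r·α(ε)), P*(c−rα, c+rα) = 1/2 + (w′−c)/(2r·α(ε)), P*(c+rα, c−rα) = 1/2 + (w−c)/(2r·α(ε)), and P*(c+rα, c+rα) = 0 (writing rα for r·α(ε)). Then for the correlated stochastic quantizers (Q1, Q2) and every pair of output values (v1, v2) ∈ {c−rα, c+rα}²: |P(Q1 = v1, Q2 = v2) − P*(v1, v2)| ≤ 3/2^d. -/

import Mathlib

open Real Set Finset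

/-- `α(ε) = (e^ε + 1)/(e^ε − 1)`. -/
noncomputable def alphaFn (ε : ℝ) : ℝ := (Real.exp ε + 1) / (Real.exp ε - 1)

/-- `q(u) = 1/2 + (u − c)/(2rα(ε))`, the probability of the `+` level for input `u`. -/
noncomputable def qOf (c r ε u : ℝ) : ℝ := 1 / 2 + (u - c) / (2 * r * alphaFn ε)

/-- `T1 = ⌊2^d · q1⌋`. -/
noncomputable def T1 (c r ε : ℝ) (d : ℕ) (w : ℝ) : ℤ := ⌊(2 : ℝ) ^ d * qOf c r ε w⌋

/-- `P(U = +1) = 2^d·q1 − ⌊2^d·q1⌋`. -/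
noncomputable def pU1 (c r ε : ℝ) (d : ℕ) (w : ℝ) : ℝ :=
  (2 : ℝ) ^ d * qOf c r ε w - ⌊(2 : ℝ) ^ d * qOf c r ε w⌋

/-- `T2 = ⌊2^d · (1 − q2)⌋`. -/
noncomputable def T2 (c r ε : ℝ) (d : ℕ) (w' : ℝ) : ℤ := ⌊(2 : ℝ) ^ d * (1 - qOf c r ε w')⌋

/-- `P(U' = +1) = 2^d·(1 − q2) − ⌊2^d·(1 − q2)⌋`. -/
noncomputable def pU2 (c r ε : ℝ) (d : ℕ) (w' : ℝ) : ℝ :=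
  (2 : ℝ) ^ d * (1 - qOf c r ε w') - ⌊(2 : ℝ) ^ d * (1 - qOf c r ε w')⌋

/-- Value of the first correlated quantizer `Q1` on outcome `(z, u)`:
`c + rα` if `z < T1`, `c − rα` if `z > T1`, and `c + U·rα` if `z = T1`. -/
noncomputable def Q1val (c r ε : ℝ) (d : ℕ) (w : ℝ) (z : ℕ) (u : Bool) : ℝ :=
  if (z : ℤ) < T1 c r ε d w then c + r * alphaFn ε
  else if T1 c r ε d w < (z : ℤ) then c - r * alphaFn ε
  else c + (if u then 1 else -1) * r * alphaFn ε

/-- Value of the second correlated quantizer `Q2` on outcome `(z, u')`: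
`c − rα` if `z < T2`, `c + rα` if `z > T2`, and `c − U'·rα` if `z = T2`. -/
noncomputable def Q2val (c r ε : ℝ) (d : ℕ) (w' : ℝ) (z : ℕ) (u' : Bool) : ℝ :=
  if (z : ℤ) < T2 c r ε d w' then c - r * alphaFn ε
  else if T2 c r ε d w' < (z : ℤ) then c + r * alphaFn ε
  else c - (if u' then 1 else -1) * r * alphaFn ε

/-- Joint pmf of the outcome `(Z, U, U')`: `Z` uniform on `{0, …, 2^d − 1}` and `Z, U, U'`
mutually independent (`u = true` encodes `U = +1`, `u' = true` encodes `U' = +1`). -/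
noncomputable def μjoint (c r ε : ℝ) (d : ℕ) (w w' : ℝ) (z : ℕ) (u u' : Bool) : ℝ :=
  ((2 : ℝ) ^ d)⁻¹ * (if u then pU1 c r ε d w else 1 - pU1 c r ε d w) *
    (if u' then pU2 c r ε d w' else 1 - pU2 c r ε d w')

/-- Joint probability `P(Q1 = v1, Q2 = v2)` for the correlated stochastic quantizers. -/
noncomputable def jointProb (c r ε : ℝ) (d : ℕ) (w w' v1 v2 : ℝ) : ℝ :=
  ∑ z ∈ Finset.range (2 ^ d), ∑ u : Bool, ∑ u' : Bool,
    μjoint c r ε d w w' z u u' *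
      (if Q1val c r ε d w z u = v1 ∧ Q2val c r ε d w' z u' = v2 then 1 else 0)

/-- The target joint distribution `P*` on `{c − rα, c + rα}²` (for `w + w' ≤ 2c`). -/
noncomputable def Pstar (c r ε : ℝ) (w w' v1 v2 : ℝ) : ℝ :=
  if v1 = c - r * alphaFn ε ∧ v2 = c - r * alphaFn ε then
    (2 * c - w - w') / (2 * r * alphaFn ε)
  else if v1 = c - r * alphaFn ε ∧ v2 = c + r * alphaFn ε then
    1 / 2 + (w' - c) / (2 * r * alphaFn ε)
  else if v1 = c + r * alphaFn ε ∧ v2 = c - r * alphaFn ε then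
    1 / 2 + (w - c) / (2 * r * alphaFn ε)
  else 0

/- ### Auxiliary lemmas -/

lemma alphaFn_gt_one {ε : ℝ} (hε : 0 < ε) : 1 < alphaFn ε := by
  have h := Real.add_one_le_exp ε
  rw [alphaFn, lt_div_iff₀ (by linarith)]
  linarith

lemma ind_and (P Q : Prop) [Decidable P] [Decidable Q] :
    (if P ∧ Q then (1:ℝ) else 0) = (if P then (1:ℝ) else 0) * (if Q then (1:ℝ) else 0) := by
  by_cases hP : P <;> by_cases hQ : Q <;> simp [hP, hQ]

lemma sum_ind_lt (N t : ℕ) (ht : t ≤ N) (x : ℝ) :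
    ∑ z ∈ Finset.range N, (if z < t then x else 0) = t * x := by
  rw [← Finset.sum_filter]
  have h : (Finset.range N).filter (fun z => z < t) = Finset.range t := by
    ext z; simp; omega
  rw [h, Finset.sum_const, Finset.card_range, nsmul_eq_mul]

lemma sum_ind_eq (N t : ℕ) (ht : t < N) (x : ℝ) :
    ∑ z ∈ Finset.range N, (if z = t then x else 0) = x := by
  rw [Finset.sum_ite_eq' (Finset.range N) t (fun _ => x), if_pos (Finset.mem_range.mpr ht)]

lemma sum_ind_gt (N t : ℕ) (ht : t < N) (x : ℝ) :
    ∑ z ∈ Finset.range N, (if t < z then x else 0) = ((N:ℝ) - 1 - t) * x := by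
  rw [← Finset.sum_filter]
  have h : (Finset.range N).filter (fun z => t < z) = Finset.Ioo t N := by
    ext z; simp [Finset.mem_Ioo]; omega
  rw [h, Finset.sum_const, Nat.card_Ioo, nsmul_eq_mul]
  congr 1
  have : t + 1 ≤ N := ht
  rw [Nat.sub_sub, Nat.cast_sub this]
  push_cast; ring

lemma sum_ind_between (N t1 t2 : ℕ) (h12 : t1 < t2) (ht : t2 < N) (x : ℝ) :
    ∑ z ∈ Finset.range N, (if t1 < z ∧ z < t2 then x else 0) = ((t2:ℝ) - 1 - t1) * x := by
  rw [← Finset.sum_filter]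
  have h : (Finset.range N).filter (fun z => t1 < z ∧ z < t2) = Finset.Ioo t1 t2 := by
    ext z; simp [Finset.mem_Ioo]; omega
  rw [h, Finset.sum_const, Nat.card_Ioo, nsmul_eq_mul]
  congr 1
  rw [Nat.sub_sub, Nat.cast_sub h12]
  push_cast; ring

lemma sum_step_mul_eq' (N t : ℕ) (ht : t < N) (a1 b1 c1 a2 b2 c2 : ℝ) :
    ∑ z ∈ Finset.range N, ((if z < t then a1 else if z = t then b1 else c1) *
        (if z < t then a2 else if z = t then b2 else c2))
      = t * (a1*a2) + b1*b2 + ((N:ℝ) - 1 - t) * (c1*c2) := by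
  have key : ∀ z ∈ Finset.range N, ((if z < t then a1 else if z = t then b1 else c1) *
        (if z < t then a2 else if z = t then b2 else c2))
      = (if z < t then a1*a2 else 0) + (if z = t then b1*b2 else 0) + (if t < z then c1*c2 else 0) := by
    intro z _
    split_ifs <;> (try ring) <;> (exfalso; omega)
  rw [Finset.sum_congr rfl key, Finset.sum_add_distrib, Finset.sum_add_distrib,
    sum_ind_lt N t ht.le, sum_ind_eq N t ht, sum_ind_gt N t ht]

lemma sum_step_mul_lt' (N t1 t2 : ℕ) (h12 : t1 < t2) (ht : t2 < N) (a1 b1 c1 a2 b2 c2 : ℝ) :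
    ∑ z ∈ Finset.range N, ((if z < t1 then a1 else if z = t1 then b1 else c1) *
        (if z < t2 then a2 else if z = t2 then b2 else c2))
      = t1 * (a1*a2) + b1*a2 + ((t2:ℝ) - 1 - t1) * (c1*a2) + c1*b2 + ((N:ℝ) - 1 - t2) * (c1*c2) := by
  have key : ∀ z ∈ Finset.range N, ((if z < t1 then a1 else if z = t1 then b1 else c1) *
        (if z < t2 then a2 else if z = t2 then b2 else c2))
      = (if z < t1 then a1*a2 else 0) + (if z = t1 then b1*a2 else 0)
        + (if t1 < z ∧ z < t2 then c1*a2 else 0) + (if z = t2 then c1*b2 else 0)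
        + (if t2 < z then c1*c2 else 0) := by
    intro z _
    split_ifs <;> (try ring) <;> (exfalso; omega)
  rw [Finset.sum_congr rfl key]
  rw [Finset.sum_add_distrib, Finset.sum_add_distrib, Finset.sum_add_distrib, Finset.sum_add_distrib,
    sum_ind_lt N t1 (by omega), sum_ind_eq N t1 (by omega), sum_ind_between N t1 t2 h12 ht,
    sum_ind_eq N t2 ht, sum_ind_gt N t2 ht]

lemma jointProb_eq (c r ε : ℝ) (d : ℕ) (w w' v1 v2 : ℝ) :
    jointProb c r ε d w w' v1 v2 = ((2:ℝ)^d)⁻¹ *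
      ∑ z ∈ Finset.range (2^d),
        ((pU1 c r ε d w * (if Q1val c r ε d w z true = v1 then 1 else 0)
          + (1 - pU1 c r ε d w) * (if Q1val c r ε d w z false = v1 then 1 else 0)) *
        (pU2 c r ε d w' * (if Q2val c r ε d w' z true = v2 then 1 else 0)
          + (1 - pU2 c r ε d w') * (if Q2val c r ε d w' z false = v2 then 1 else 0))) := by
  unfold jointProb μjoint
  rw [Finset.mul_sum]
  apply Finset.sum_congr rfl
  intro z _
  simp only [Fintype.sum_bool, ind_and, if_true, if_false, Bool.false_eq_true]
  ring

section eval

variable (c r ε : ℝ) (d : ℕ)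


lemma A_eval_plus (w : ℝ) (t1n : ℕ) (hT : T1 c r ε d w = (t1n:ℤ))
    (hne : c - r * alphaFn ε ≠ c + r * alphaFn ε) (z : ℕ) :
    pU1 c r ε d w * (if Q1val c r ε d w z true = c + r*alphaFn ε then (1:ℝ) else 0)
      + (1 - pU1 c r ε d w) * (if Q1val c r ε d w z false = c + r*alphaFn ε then (1:ℝ) else 0)
      = if z < t1n then 1 else if z = t1n then pU1 c r ε d w else 0 := by
  have e1 : c + (1:ℝ) * r * alphaFn ε = c + r * alphaFn ε := by ring
  have e2 : c + (-1:ℝ) * r * alphaFn ε = c - r * alphaFn ε := by ring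
  unfold Q1val
  rw [hT]
  rcases lt_trichotomy z t1n with h | h | h
  · have hz : (z:ℤ) < (t1n:ℤ) := by exact_mod_cast h
    rw [if_pos hz, if_pos hz, if_pos rfl, if_pos h]
    ring
  · subst h
    simp only [lt_self_iff_false, if_false, eq_self_iff_true, if_true, Bool.false_eq_true]
    rw [e1, e2, if_pos rfl, if_neg hne]
    ring
  · have hz : (t1n:ℤ) < (z:ℤ) := by exact_mod_cast h
    have hz' : ¬ ((z:ℤ) < (t1n:ℤ)) := by omega
    rw [if_neg hz', if_neg hz', if_pos hz, if_pos hz, if_neg hne,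
        if_neg (by omega : ¬ z < t1n), if_neg (by omega : ¬ z = t1n)]
    ring


lemma A_eval_minus (w : ℝ) (t1n : ℕ) (hT : T1 c r ε d w = (t1n:ℤ))
    (hne : c - r * alphaFn ε ≠ c + r * alphaFn ε) (z : ℕ) :
    pU1 c r ε d w * (if Q1val c r ε d w z true = c - r*alphaFn ε then (1:ℝ) else 0)
      + (1 - pU1 c r ε d w) * (if Q1val c r ε d w z false = c - r*alphaFn ε then (1:ℝ) else 0)
      = if z < t1n then 0 else if z = t1n then 1 - pU1 c r ε d w else 1 := by
  have e1 : c + (1:ℝ) * r * alphaFn ε = c + r * alphaFn ε := by ring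
  have e2 : c + (-1:ℝ) * r * alphaFn ε = c - r * alphaFn ε := by ring
  unfold Q1val
  rw [hT]
  rcases lt_trichotomy z t1n with h | h | h
  · have hz : (z:ℤ) < (t1n:ℤ) := by exact_mod_cast h
    rw [if_pos hz, if_pos hz, if_neg hne.symm, if_pos h]
    ring
  · subst h
    simp only [lt_self_iff_false, if_false, eq_self_iff_true, if_true, Bool.false_eq_true]
    rw [e1, e2, if_neg hne.symm, if_pos rfl]
    ring
  · have hz : (t1n:ℤ) < (z:ℤ) := by exact_mod_cast h
    have hz' : ¬ ((z:ℤ) < (t1n:ℤ)) := by omega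
    rw [if_neg hz', if_neg hz', if_pos hz, if_pos hz, if_pos rfl,
        if_neg (by omega : ¬ z < t1n), if_neg (by omega : ¬ z = t1n)]
    ring


lemma B_eval_minus (w' : ℝ) (t2n : ℕ) (hT : T2 c r ε d w' = (t2n:ℤ))
    (hne : c - r * alphaFn ε ≠ c + r * alphaFn ε) (z : ℕ) :
    pU2 c r ε d w' * (if Q2val c r ε d w' z true = c - r*alphaFn ε then (1:ℝ) else 0)
      + (1 - pU2 c r ε d w') * (if Q2val c r ε d w' z false = c - r*alphaFn ε then (1:ℝ) else 0)
      = if z < t2n then 1 else if z = t2n then pU2 c r ε d w' else 0 := by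
  have e1 : c - (1:ℝ) * r * alphaFn ε = c - r * alphaFn ε := by ring
  have e2 : c - (-1:ℝ) * r * alphaFn ε = c + r * alphaFn ε := by ring
  unfold Q2val
  rw [hT]
  rcases lt_trichotomy z t2n with h | h | h
  · have hz : (z:ℤ) < (t2n:ℤ) := by exact_mod_cast h
    rw [if_pos hz, if_pos hz, if_pos rfl, if_pos h]
    ring
  · subst h
    simp only [lt_self_iff_false, if_false, eq_self_iff_true, if_true, Bool.false_eq_true]
    rw [e1, e2, if_pos rfl, if_neg hne.symm]
    ring
  · have hz : (t2n:ℤ) < (z:ℤ) := by exact_mod_cast h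
    have hz' : ¬ ((z:ℤ) < (t2n:ℤ)) := by omega
    rw [if_neg hz', if_neg hz', if_pos hz, if_pos hz, if_neg hne.symm,
        if_neg (by omega : ¬ z < t2n), if_neg (by omega : ¬ z = t2n)]
    ring


lemma B_eval_plus (w' : ℝ) (t2n : ℕ) (hT : T2 c r ε d w' = (t2n:ℤ))
    (hne : c - r * alphaFn ε ≠ c + r * alphaFn ε) (z : ℕ) :
    pU2 c r ε d w' * (if Q2val c r ε d w' z true = c + r*alphaFn ε then (1:ℝ) else 0)
      + (1 - pU2 c r ε d w') * (if Q2val c r ε d w' z false = c + r*alphaFn ε then (1:ℝ) else 0)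
      = if z < t2n then 0 else if z = t2n then 1 - pU2 c r ε d w' else 1 := by
  have e1 : c - (1:ℝ) * r * alphaFn ε = c - r * alphaFn ε := by ring
  have e2 : c - (-1:ℝ) * r * alphaFn ε = c + r * alphaFn ε := by ring
  unfold Q2val
  rw [hT]
  rcases lt_trichotomy z t2n with h | h | h
  · have hz : (z:ℤ) < (t2n:ℤ) := by exact_mod_cast h
    rw [if_pos hz, if_pos hz, if_neg hne, if_pos h]
    ring
  · subst h
    simp only [lt_self_iff_false, if_false, eq_self_iff_true, if_true, Bool.false_eq_true]
    rw [e1, e2, if_neg hne, if_pos rfl]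
    ring
  · have hz : (t2n:ℤ) < (z:ℤ) := by exact_mod_cast h
    have hz' : ¬ ((z:ℤ) < (t2n:ℤ)) := by omega
    rw [if_neg hz', if_neg hz', if_pos hz, if_pos hz, if_pos rfl,
        if_neg (by omega : ¬ z < t2n), if_neg (by omega : ¬ z = t2n)]
    ring

end eval


lemma qOf_mem {c r ε : ℝ} (hr : 0 < r) (hε : 0 < ε) {u : ℝ} (h1 : c - r ≤ u) (h2 : u ≤ c + r) :
    0 < qOf c r ε u ∧ qOf c r ε u < 1 := by
  have hα : 1 < alphaFn ε := alphaFn_gt_one hε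
  have hD : (0:ℝ) < 2 * r * alphaFn ε := by nlinarith
  unfold qOf
  constructor
  · have hx : -(1/2 : ℝ) < (u - c) / (2 * r * alphaFn ε) := by
      rw [lt_div_iff₀ hD]; nlinarith
    linarith
  · have hx : (u - c) / (2 * r * alphaFn ε) < 1/2 := by
      rw [div_lt_iff₀ hD]; nlinarith
    linarith

lemma abs_sub_le_of_mul {N X Y : ℝ} (hN : 0 < N) (h : |N * X - N * Y| ≤ 3) : |X - Y| ≤ 3 / N := by
  have habs : |N * X - N * Y| = N * |X - Y| := by
    rw [← mul_sub, abs_mul, abs_of_pos hN]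
  rw [le_div_iff₀ hN]
  rw [habs] at h
  linarith [mul_comm N |X - Y|]

set_option maxHeartbeats 1000000 in
/-- if `w + w' ≤ 2c`, then for every pair of output values
`(v1, v2) ∈ {c − rα, c + rα}²`, the joint distribution of the correlated stochastic
quantizers is within `3/2^d` of the target joint distribution `P*`. -/
theorem stmt7 (c r ε : ℝ) (hr : 0 < r) (hε : 0 < ε) (d : ℕ)
    (w w' : ℝ) (hw : w ∈ Icc (c - r) (c + r)) (hw' : w' ∈ Icc (c - r) (c + r))
    (hsum : w + w' ≤ 2 * c) :
    ∀ v1 ∈ ({c - r * alphaFn ε, c + r * alphaFn ε} : Set ℝ),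
      ∀ v2 ∈ ({c - r * alphaFn ε, c + r * alphaFn ε} : Set ℝ),
        |jointProb c r ε d w w' v1 v2 - Pstar c r ε w w' v1 v2| ≤ 3 / (2 : ℝ) ^ d := by
  obtain ⟨hw1, hw2⟩ := hw
  obtain ⟨hw1', hw2'⟩ := hw'
  have hα : 1 < alphaFn ε := alphaFn_gt_one hε
  have hrα : 0 < r * alphaFn ε := by nlinarith
  have hne : c - r * alphaFn ε ≠ c + r * alphaFn ε := by intro h; nlinarith [h]
  have hN0 : (0:ℝ) < (2:ℝ)^d := by positivity
  obtain ⟨hq1pos, hq1lt⟩ := qOf_mem hr hε hw1 hw2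
  obtain ⟨hq2pos, hq2lt⟩ := qOf_mem hr hε hw1' hw2'
  have hT1nonneg : 0 ≤ T1 c r ε d w := by
    unfold T1; exact Int.floor_nonneg.mpr (mul_nonneg hN0.le hq1pos.le)
  have hT2nonneg : 0 ≤ T2 c r ε d w' := by
    unfold T2; exact Int.floor_nonneg.mpr (mul_nonneg hN0.le (by linarith))
  obtain ⟨t1, hT1⟩ : ∃ t : ℕ, T1 c r ε d w = (t:ℤ) :=
    ⟨(T1 c r ε d w).toNat, (Int.toNat_of_nonneg hT1nonneg).symm⟩
  obtain ⟨t2, hT2⟩ : ∃ t : ℕ, T2 c r ε d w' = (t:ℤ) :=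
    ⟨(T2 c r ε d w').toNat, (Int.toNat_of_nonneg hT2nonneg).symm⟩
  have hT1lt : T1 c r ε d w < (2:ℤ)^d := by
    unfold T1; rw [Int.floor_lt]; push_cast; nlinarith
  have hT2lt : T2 c r ε d w' < (2:ℤ)^d := by
    unfold T2; rw [Int.floor_lt]; push_cast; nlinarith
  have ht1N : t1 < 2^d := by
    have h : (t1:ℤ) < (2:ℤ)^d := hT1 ▸ hT1lt
    exact_mod_cast h
  have ht2N : t2 < 2^d := by
    have h : (t2:ℤ) < (2:ℤ)^d := hT2 ▸ hT2lt
    exact_mod_cast h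
  have hq12 : qOf c r ε w ≤ 1 - qOf c r ε w' := by
    have hD : (0:ℝ) < 2 * r * alphaFn ε := by nlinarith
    have hdiv : (w - c) / (2*r*alphaFn ε) + (w' - c) / (2*r*alphaFn ε) ≤ 0 := by
      rw [← add_div]
      exact div_nonpos_of_nonpos_of_nonneg (by linarith) hD.le
    unfold qOf; linarith
  have ht12 : t1 ≤ t2 := by
    have h := Int.floor_le_floor (R := ℝ) (mul_le_mul_of_nonneg_left hq12 hN0.le)
    have h2 : T1 c r ε d w ≤ T2 c r ε d w' := by unfold T1 T2; exact h
    rw [hT1, hT2] at h2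
    exact_mod_cast h2
  have hp1a : 0 ≤ pU1 c r ε d w := by
    unfold pU1; linarith [Int.floor_le ((2:ℝ)^d * qOf c r ε w)]
  have hp1b : pU1 c r ε d w ≤ 1 := by
    unfold pU1; linarith [Int.lt_floor_add_one ((2:ℝ)^d * qOf c r ε w)]
  have hp2a : 0 ≤ pU2 c r ε d w' := by
    unfold pU2; linarith [Int.floor_le ((2:ℝ)^d * (1 - qOf c r ε w'))]
  have hp2b : pU2 c r ε d w' ≤ 1 := by
    unfold pU2; linarith [Int.lt_floor_add_one ((2:ℝ)^d * (1 - qOf c r ε w'))]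
  have hNq1 : (2:ℝ)^d * qOf c r ε w = (t1:ℝ) + pU1 c r ε d w := by
    have h := hT1; unfold T1 at h
    unfold pU1; rw [h]; push_cast; ring
  have hNq2 : (2:ℝ)^d * (1 - qOf c r ε w') = (t2:ℝ) + pU2 c r ε d w' := by
    have h := hT2; unfold T2 at h
    unfold pU2; rw [h]; push_cast; ring
  have hprods := And.intro (mul_nonneg hp1a hp2a) (And.intro
    (mul_nonneg (by linarith : (0:ℝ) ≤ 1 - pU1 c r ε d w) hp2a) (And.intro
    (mul_nonneg hp1a (by linarith : (0:ℝ) ≤ 1 - pU2 c r ε d w'))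
    (mul_nonneg (by linarith : (0:ℝ) ≤ 1 - pU1 c r ε d w)
      (by linarith : (0:ℝ) ≤ 1 - pU2 c r ε d w'))))
  obtain ⟨hh1, hh2, hh3, hh4⟩ := hprods
  intro v1 hv1 v2 hv2
  simp only [Set.mem_insert_iff, Set.mem_singleton_iff] at hv1 hv2
  rcases hv1 with rfl | rfl <;> rcases hv2 with rfl | rfl
  · -- (−, −)
    have hPs : Pstar c r ε w w' (c - r*alphaFn ε) (c - r*alphaFn ε)
        = 1 - qOf c r ε w - qOf c r ε w' := by
      unfold Pstar
      rw [if_pos ⟨rfl, rfl⟩]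
      unfold qOf
      field_simp
      ring
    have htarget : (2:ℝ)^d * (1 - qOf c r ε w - qOf c r ε w')
        = (t2:ℝ) + pU2 c r ε d w' - (t1:ℝ) - pU1 c r ε d w := by
      linear_combination hNq2 - hNq1
    rw [jointProb_eq, hPs]
    simp only [A_eval_minus c r ε d w t1 hT1 hne, B_eval_minus c r ε d w' t2 hT2 hne]
    rcases eq_or_lt_of_le ht12 with heq | hlt
    · subst heq
      rw [sum_step_mul_eq' (2^d) t1 ht1N]
      apply abs_sub_le_of_mul hN0
      rw [← mul_assoc, mul_inv_cancel₀ (ne_of_gt hN0), one_mul, htarget]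
      push_cast
      rw [abs_le]
      constructor <;> linarith [hh1, hh2, hh3, hh4]
    · rw [sum_step_mul_lt' (2^d) t1 t2 hlt ht2N]
      apply abs_sub_le_of_mul hN0
      rw [← mul_assoc, mul_inv_cancel₀ (ne_of_gt hN0), one_mul, htarget]
      push_cast
      rw [abs_le]
      constructor <;> linarith [hh1, hh2, hh3, hh4]
  · -- (−, +)
    have hPs : Pstar c r ε w w' (c - r*alphaFn ε) (c + r*alphaFn ε) = qOf c r ε w' := by
      unfold Pstar
      rw [if_neg (fun h => hne.symm h.2), if_pos ⟨rfl, rfl⟩]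
      rfl
    have htarget : (2:ℝ)^d * qOf c r ε w'
        = (2:ℝ)^d - (t2:ℝ) - pU2 c r ε d w' := by
      linear_combination -hNq2
    rw [jointProb_eq, hPs]
    simp only [A_eval_minus c r ε d w t1 hT1 hne, B_eval_plus c r ε d w' t2 hT2 hne]
    rcases eq_or_lt_of_le ht12 with heq | hlt
    · subst heq
      rw [sum_step_mul_eq' (2^d) t1 ht1N]
      apply abs_sub_le_of_mul hN0
      rw [← mul_assoc, mul_inv_cancel₀ (ne_of_gt hN0), one_mul, htarget]
      push_cast
      rw [abs_le]
      constructor <;> linarith [hh1, hh2, hh3, hh4]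
    · rw [sum_step_mul_lt' (2^d) t1 t2 hlt ht2N]
      apply abs_sub_le_of_mul hN0
      rw [← mul_assoc, mul_inv_cancel₀ (ne_of_gt hN0), one_mul, htarget]
      push_cast
      rw [abs_le]
      constructor <;> linarith [hh1, hh2, hh3, hh4]
  · -- (+, −)
    have hPs : Pstar c r ε w w' (c + r*alphaFn ε) (c - r*alphaFn ε) = qOf c r ε w := by
      unfold Pstar
      rw [if_neg (fun h => hne.symm h.1), if_neg (fun h => hne.symm h.1), if_pos ⟨rfl, rfl⟩]
      rfl
    rw [jointProb_eq, hPs]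
    simp only [A_eval_plus c r ε d w t1 hT1 hne, B_eval_minus c r ε d w' t2 hT2 hne]
    rcases eq_or_lt_of_le ht12 with heq | hlt
    · subst heq
      rw [sum_step_mul_eq' (2^d) t1 ht1N]
      apply abs_sub_le_of_mul hN0
      rw [← mul_assoc, mul_inv_cancel₀ (ne_of_gt hN0), one_mul, hNq1]
      push_cast
      rw [abs_le]
      constructor <;> linarith [hh1, hh2, hh3, hh4]
    · rw [sum_step_mul_lt' (2^d) t1 t2 hlt ht2N]
      apply abs_sub_le_of_mul hN0
      rw [← mul_assoc, mul_inv_cancel₀ (ne_of_gt hN0), one_mul, hNq1]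
      push_cast
      rw [abs_le]
      constructor <;> linarith [hh1, hh2, hh3, hh4]
  · -- (+, +)
    have hPs : Pstar c r ε w w' (c + r*alphaFn ε) (c + r*alphaFn ε) = 0 := by
      unfold Pstar
      rw [if_neg (fun h => hne.symm h.1), if_neg (fun h => hne.symm h.1),
        if_neg (fun h => hne.symm h.2)]
    rw [jointProb_eq, hPs]
    simp only [A_eval_plus c r ε d w t1 hT1 hne, B_eval_plus c r ε d w' t2 hT2 hne]
    rcases eq_or_lt_of_le ht12 with heq | hlt
    · subst heq
      rw [sum_step_mul_eq' (2^d) t1 ht1N]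
      apply abs_sub_le_of_mul hN0
      rw [← mul_assoc, mul_inv_cancel₀ (ne_of_gt hN0), one_mul, mul_zero]
      push_cast
      rw [abs_le]
      constructor <;> linarith [hh1, hh2, hh3, hh4]
    · rw [sum_step_mul_lt' (2^d) t1 t2 hlt ht2N]
      apply abs_sub_le_of_mul hN0
      rw [← mul_assoc, mul_inv_cancel₀ (ne_of_gt hN0), one_mul, mul_zero]
      push_cast
      rw [abs_le]
      constructor <;> linarith [hh1, hh2, hh3, hh4]
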